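/- For a well-formed decision tree T with classifier κ_T and instance v with κ_T(v) = c, the number of contrastive explanations (CXps) of κ_T at v is at most the number of leaves of T whose class label is different from c. -/

import Mathlib

/-- A (multi-valued, univariate) decision tree over `m` features with domains
`D i` and classes `K`: a leaf carries a class, and an internal node carries a
tested feature `i` together with a finite nonempty family of children (indexed
by `Fin (n+1)`), each child labeled with a subset of `D i`. -/
inductive DTree (m : ℕ) (D : Fin m → Type) (K : Type) : Type where
  | leaf : K → DTree m D K
  | node : (i : Fin m) → (n : ℕ) → (Fin (n + 1) → Set (D i)) →
      (Fin (n + 1) → DTree m D K) → DTree m D K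

namespace DTree

variable {m : ℕ} {D : Fin m → Type} {K : Type}

/-- `PathTo T p c` holds when `p` is the list of edges (each recording the
tested feature and the edge's label) of a root-to-leaf path of `T` whose leaf
carries class `c`. -/
inductive PathTo : DTree m D K → List (Σ i : Fin m, Set (D i)) → K → Prop where
  | leaf (c : K) : PathTo (.leaf c) [] c
  | node {i : Fin m} {n : ℕ} {lab : Fin (n + 1) → Set (D i)}
      {ch : Fin (n + 1) → DTree m D K} (k : Fin (n + 1))
      {p : List (Σ i : Fin m, Set (D i))} {c : K} :
      PathTo (ch k) p c → PathTo (.node i n lab ch) (⟨i, lab k⟩ :: p) c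

/-- A path `p` is consistent with a point `x` of feature space if `x i ∈ E`
for every edge of `p` testing feature `i` with label `E`. -/
def Consistent (x : ∀ i, D i) (p : List (Σ i : Fin m, Set (D i))) : Prop :=
  ∀ e ∈ p, x e.1 ∈ e.2

/-- At every internal node, the children's labels are pairwise disjoint and
their union is the whole domain of the tested feature. -/
inductive Partitioned : DTree m D K → Prop where
  | leaf (c : K) : Partitioned (.leaf c)
  | node {i : Fin m} {n : ℕ} {lab : Fin (n + 1) → Set (D i)}
      {ch : Fin (n + 1) → DTree m D K} :
      (∀ k k' : Fin (n + 1), k ≠ k' → lab k ∩ lab k' = ∅) →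
      (∀ d : D i, ∃ k : Fin (n + 1), d ∈ lab k) →
      (∀ k : Fin (n + 1), Partitioned (ch k)) →
      Partitioned (.node i n lab ch)

/-- No root-to-leaf path of `T` is inconsistent: along every root-to-leaf
path, for every feature `i`, the intersection of the labels of the edges
testing `i` on that path is nonempty. -/
def NoInconsistentPath (T : DTree m D K) : Prop :=
  ∀ (p : List (Σ i : Fin m, Set (D i))) (c : K), T.PathTo p c →
    ∀ i : Fin m, ∃ d : D i,
      ∀ E : Set (D i), (⟨i, E⟩ : Σ j : Fin m, Set (D j)) ∈ p → d ∈ E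

/-- A decision tree is well-formed if every node's children's labels partition
the tested feature's domain and no root-to-leaf path is inconsistent. -/
def WellFormed (T : DTree m D K) : Prop := T.Partitioned ∧ T.NoInconsistentPath

/-- `Free v p` is the set of features `i` such that some edge of `p` tests `i`
with a label `E` with `v i ∉ E`. -/
def Free (v : ∀ i, D i) (p : List (Σ i : Fin m, Set (D i))) : Set (Fin m) :=
  {i | ∃ E : Set (D i), (⟨i, E⟩ : Σ j : Fin m, Set (D j)) ∈ p ∧ v i ∉ E}

end DTree

/-- `X` is a weak abductive explanation (weak AXp) for classifier `κ` at point
`v`. -/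
def WeakAXp {m : ℕ} {D : Fin m → Type} {K : Type} (κ : (∀ i, D i) → K)
    (v : ∀ i, D i) (X : Set (Fin m)) : Prop :=
  ∀ x : ∀ i, D i, (∀ i ∈ X, x i = v i) → κ x = κ v

/-- `Y` is a weak contrastive explanation (weak CXp) for `κ` at `v`. -/
def WeakCXp {m : ℕ} {D : Fin m → Type} {K : Type} (κ : (∀ i, D i) → K)
    (v : ∀ i, D i) (Y : Set (Fin m)) : Prop :=
  ∃ x : ∀ i, D i, (∀ j ∉ Y, x j = v j) ∧ κ x ≠ κ v

/-- An AXp is a subset-inclusion-minimal weak AXp. -/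
def AXp {m : ℕ} {D : Fin m → Type} {K : Type} (κ : (∀ i, D i) → K)
    (v : ∀ i, D i) (X : Set (Fin m)) : Prop :=
  WeakAXp κ v X ∧ ∀ X' : Set (Fin m), X' ⊂ X → ¬ WeakAXp κ v X'

/-- A CXp is a subset-inclusion-minimal weak CXp. -/
def CXp {m : ℕ} {D : Fin m → Type} {K : Type} (κ : (∀ i, D i) → K)
    (v : ∀ i, D i) (Y : Set (Fin m)) : Prop :=
  WeakCXp κ v Y ∧ ∀ Y' : Set (Fin m), Y' ⊂ Y → ¬ WeakCXp κ v Y'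

namespace DTree
/-- The number of leaves of a decision tree whose class label differs from `c`. -/
def countLeavesNe {m : ℕ} {D : Fin m → Type} {K : Type} [DecidableEq K]
    (c : K) : DTree m D K → ℕ
  | .leaf c' => if c' = c then 0 else 1
  | .node _ n _ ch => ∑ k : Fin (n + 1), countLeavesNe c (ch k)
end DTree

namespace DTreeAux

open DTree

variable {m : ℕ} {D : Fin m → Type} {K : Type}

/-- The list of all root-to-leaf paths of `T` whose leaf class differs from `c0`. -/
def pathsNe [DecidableEq K] (c0 : K) : DTree m D K → List (List (Σ i : Fin m, Set (D i)))
  | .leaf c' => if c' = c0 then [] else [[]]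
  | .node i n lab ch =>
      (List.finRange (n + 1)).flatMap fun k =>
        (pathsNe c0 (ch k)).map (fun p => ⟨i, lab k⟩ :: p)

theorem length_pathsNe [DecidableEq K] (c0 : K) (T : DTree m D K) :
    (pathsNe c0 T).length = T.countLeavesNe c0 := by
  induction T with
  | leaf c' =>
    by_cases h : c' = c0 <;> simp [pathsNe, DTree.countLeavesNe, h]
  | node i n lab ch ih =>
    simp [pathsNe, DTree.countLeavesNe, Function.comp_def, ih, Fin.sum_univ_def]

theorem mem_pathsNe [DecidableEq K] {c0 : K} {T : DTree m D K}
    {p : List (Σ i : Fin m, Set (D i))} {c : K}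
    (hp : T.PathTo p c) (hc : c ≠ c0) : p ∈ pathsNe c0 T := by
  induction hp with
  | leaf c => simp [pathsNe, hc]
  | node k hp ih =>
    simp only [pathsNe, List.mem_flatMap, List.mem_map]
    exact ⟨k, List.mem_finRange k, _, ih hc, rfl⟩

theorem exists_consistent_path {T : DTree m D K} (hP : T.Partitioned)
    (x : ∀ i, D i) :
    ∃ (p : List (Σ i : Fin m, Set (D i))) (c : K), T.PathTo p c ∧ Consistent x p := by
  induction hP with
  | leaf c =>
    exact ⟨[], c, .leaf c, by simp [Consistent]⟩
  | @node i n lab ch hdisj hcov hch ih =>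
    obtain ⟨k, hk⟩ := hcov (x i)
    obtain ⟨p, c, hp, hcons⟩ := ih k
    refine ⟨⟨i, lab k⟩ :: p, c, .node k hp, ?_⟩
    intro e he
    rcases List.mem_cons.mp he with h | h
    · subst h; exact hk
    · exact hcons e h

end DTreeAux

/-- For a well-formed decision tree `T` with classifier `κ` and instance `v`
(with prediction `κ v`), the number of CXps of `κ` at `v` is at most the
number of leaves of `T` whose class label is different from `κ v`. -/
theorem card_cxp_le_countLeavesNe {m : ℕ} {D : Fin m → Type} {K : Type}
    [∀ i, Nonempty (D i)] [DecidableEq K]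
    (T : DTree m D K) (hT : T.WellFormed) (κ : (∀ i, D i) → K)
    (hκ : ∀ (x : ∀ i, D i) (p : List (Σ i : Fin m, Set (D i))) (c : K),
      T.PathTo p c → DTree.Consistent x p → κ x = c)
    (v : ∀ i, D i) :
    {Y : Set (Fin m) | CXp κ v Y}.ncard ≤ T.countLeavesNe (κ v) := by
  classical
  obtain ⟨hPart, hNIP⟩ := hT
  -- every CXp is the `Free` set of some path in `pathsNe (κ v) T`
  have key : {Y : Set (Fin m) | CXp κ v Y} ⊆
      DTree.Free v '' {p | p ∈ DTreeAux.pathsNe (κ v) T} := by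
    rintro Y ⟨⟨x, hx, hne⟩, hmin⟩
    obtain ⟨p, c, hp, hcons⟩ := DTreeAux.exists_consistent_path hPart x
    have hxc : κ x = c := hκ x p c hp hcons
    have hcne : c ≠ κ v := hxc ▸ hne
    have hsub : DTree.Free v p ⊆ Y := by
      rintro i ⟨E, hE, hvE⟩
      by_contra hiY
      exact hvE ((hx i hiY) ▸ hcons ⟨i, E⟩ hE)
    -- Free v p is itself a weak CXp
    have hweak : WeakCXp κ v (DTree.Free v p) := by
      set d : ∀ i, D i := fun i => (hNIP p c hp i).choose with hdd
      refine ⟨fun i => if i ∈ DTree.Free v p then d i else v i, ?_, ?_⟩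
      · intro j hj; simp [hj]
      · have hcons' : DTree.Consistent
            (fun i => if i ∈ DTree.Free v p then d i else v i) p := by
          rintro ⟨i, E⟩ hE
          by_cases hi : i ∈ DTree.Free v p
          · simpa [hi] using (hNIP p c hp i).choose_spec E hE
          · have : v i ∈ E := by
              by_contra hv
              exact hi ⟨E, hE, hv⟩
            simpa [hi] using this
        rw [hκ _ p c hp hcons']
        exact hcne
    have : DTree.Free v p = Y := by
      rcases hsub.ssubset_or_eq with hss | heq
      · exact absurd hweak (hmin _ hss)
      · exact heq
    exact ⟨p, DTreeAux.mem_pathsNe hp hcne, this⟩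
  have hfin : ({p | p ∈ DTreeAux.pathsNe (κ v) T} : Set _).Finite :=
    (DTreeAux.pathsNe (κ v) T).finite_toSet
  calc {Y : Set (Fin m) | CXp κ v Y}.ncard
      ≤ (DTree.Free v '' {p | p ∈ DTreeAux.pathsNe (κ v) T}).ncard :=
        Set.ncard_le_ncard key (hfin.image _)
    _ ≤ ({p | p ∈ DTreeAux.pathsNe (κ v) T} : Set _).ncard :=
        Set.ncard_image_le hfin
    _ = (DTreeAux.pathsNe (κ v) T).toFinset.card := by
        rw [← Set.ncard_coe_finset]; congr 1; ext p; simp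
    _ ≤ (DTreeAux.pathsNe (κ v) T).length := (DTreeAux.pathsNe (κ v) T).toFinset_card_le
    _ = T.countLeavesNe (κ v) := DTreeAux.length_pathsNe _ _
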